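/- Let G be a finite group. Then the Tate homology group Ĥ_0(G; (I,2)) is isomorphic to G^{ab} ⊗_ℤ ℤ/2, via the map sending g ⊗ 1 to the class of g − 1. -/

import Mathlib

open TensorProduct

section Coinvariants
variable {G : Type*} [Group G] {V : Type*} [AddCommGroup V] [Module ℤ V]

/-- The norm map `v ↦ ∑ g • v` for a representation of a finite group. -/
noncomputable def normMap [Fintype G] (ρ : Representation ℤ G V) : V →ₗ[ℤ] V :=
  ∑ g : G, (ρ g : V →ₗ[ℤ] V)

/-- The submodule generated by the elements `g • v - v`, so that the quotient of `V` by it is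
the module of coinvariants `ℤ ⊗_{ℤG} V`. -/
def coinvRel (ρ : Representation ℤ G V) : Submodule ℤ V :=
  Submodule.span ℤ (Set.range fun p : G × V => ρ p.1 p.2 - p.2)

/-- The coinvariants `ℤ ⊗_{ℤG} V` of a representation. -/
abbrev Coinv (ρ : Representation ℤ G V) : Type _ := V ⧸ coinvRel ρ

lemma coinvRel_le [Fintype G] (ρ : Representation ℤ G V) :
    coinvRel ρ ≤ LinearMap.ker (normMap ρ) := by
  rw [coinvRel, Submodule.span_le]
  rintro x ⟨⟨g, v⟩, rfl⟩
  have key : (normMap ρ) ((ρ g) v) = (normMap ρ) v := by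
    simp only [normMap, LinearMap.sum_apply]
    calc ∑ h : G, (ρ h) ((ρ g) v)
        = ∑ h : G, (ρ (h * g)) v := by
          refine Finset.sum_congr rfl fun h _ => ?_
          rw [map_mul]; rfl
      _ = ∑ h : G, (ρ h) v :=
          Fintype.sum_bijective (· * g) (Group.mulRight_bijective g) _ _ fun x => rfl
  simp only [SetLike.mem_coe, LinearMap.mem_ker, map_sub, key, sub_self]

/-- The norm map `ℤ ⊗_{ℤG} V → V`, `1 ⊗ v ↦ ∑ g • v`, induced on the coinvariants.  Its kernel
is the Tate homology group `Ĥ₀(G; V)` (the codomain restriction to the invariants `V^G` does not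
change the kernel). -/
noncomputable def normBar [Fintype G] (ρ : Representation ℤ G V) : Coinv ρ →ₗ[ℤ] V where
  toFun x := Submodule.liftQ (coinvRel ρ) (normMap ρ) (coinvRel_le ρ) x
  map_add' x y := map_add _ x y
  map_smul' n x := by
    simp only [RingHom.id_apply, map_zsmul]
    first
      | exact (int_smul_eq_zsmul _ n _).symm
      | exact (int_smul_eq_zsmul _ n _)

end Coinvariants

section SubQuot
variable {G : Type*} [Group G] {V : Type*} [AddCommGroup V] [Module ℤ V]

/-- The restriction of a representation to an invariant submodule. -/
def subRep (ρ : Representation ℤ G V) (p : Submodule ℤ V)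
    (hp : ∀ g : G, ∀ x ∈ p, ρ g x ∈ p) : Representation ℤ G p where
  toFun g := (ρ g).restrict (hp g)
  map_one' := by
    ext x
    simp [LinearMap.restrict_apply]
  map_mul' g h := by
    ext x
    simp [LinearMap.restrict_apply, map_mul]

/-- The representation induced on the quotient by an invariant submodule. -/
noncomputable def quotRep (ρ : Representation ℤ G V) (p : Submodule ℤ V)
    (hp : ∀ g : G, ∀ x ∈ p, ρ g x ∈ p) : Representation ℤ G (V ⧸ p) where
  toFun g := Submodule.mapQ p p (ρ g) (hp g)
  map_one' := by
    apply LinearMap.ext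
    intro x
    obtain ⟨v, rfl⟩ := Submodule.Quotient.mk_surjective p x
    simp [Submodule.mapQ_apply]
  map_mul' g h := by
    apply LinearMap.ext
    intro x
    obtain ⟨v, rfl⟩ := Submodule.Quotient.mk_surjective p x
    simp [Submodule.mapQ_apply, map_mul]

end SubQuot

section GroupRing
variable (G : Type*) [Group G]

/-- The left regular representation of `G` on the group ring `ℤG`. -/
noncomputable def regRep : Representation ℤ G (MonoidAlgebra ℤ G) where
  toFun g := LinearMap.mulLeft ℤ (MonoidAlgebra.of ℤ G g)
  map_one' := by
    apply LinearMap.ext; intro x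
    simp [MonoidAlgebra.of_apply, ← MonoidAlgebra.one_def]
  map_mul' g h := by
    apply LinearMap.ext; intro x
    simp only [MonoidAlgebra.of_apply, LinearMap.mulLeft_apply, Module.End.mul_apply]
    rw [← mul_assoc, MonoidAlgebra.single_mul_single, mul_one]

/-- The augmentation map `ε : ℤG → ℤ`. -/
noncomputable def aug : MonoidAlgebra ℤ G →ₐ[ℤ] ℤ := MonoidAlgebra.lift ℤ ℤ G 1

/-- The augmentation ideal `I = ker(ε : ℤG → ℤ)`. -/
noncomputable def augI : Ideal (MonoidAlgebra ℤ G) := RingHom.ker (aug G).toRingHom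

/-- The mod 2 augmentation map `ℤG → ℤ/2`. -/
noncomputable def aug2 : MonoidAlgebra ℤ G →+* ZMod 2 :=
  (Int.castRingHom (ZMod 2)).comp (aug G).toRingHom

/-- The ideal `(I, 2) = ker(ℤG → ℤ/2)` generated by the augmentation ideal and `2`. -/
noncomputable def I2 : Ideal (MonoidAlgebra ℤ G) := RingHom.ker (aug2 G)

/-- The norm element `N = ∑_{g ∈ G} g ∈ ℤG`. -/
noncomputable def Nelt [Fintype G] : MonoidAlgebra ℤ G := ∑ g : G, MonoidAlgebra.of ℤ G g

/-- The (left) ideal of `ℤG` generated by the norm element `N`; the quotient by it is `ℤG/N`. -/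
noncomputable def NIdeal [Fintype G] : Ideal (MonoidAlgebra ℤ G) := Ideal.span {Nelt G}

/-- The left ideal `(N, 2)` of `ℤG` generated by the norm element `N` and `2`. -/
noncomputable def N2 [Fintype G] : Ideal (MonoidAlgebra ℤ G) := Ideal.span {Nelt G, 2}

lemma aug_single (g : G) : aug G (MonoidAlgebra.single g 1) = 1 := by
  simp [aug, MonoidAlgebra.lift_single]

lemma of_sub_one_mem_augI (g : G) :
    MonoidAlgebra.of ℤ G g - 1 ∈ (augI G).restrictScalars ℤ := by
  simp [augI, RingHom.mem_ker, map_sub, aug_single]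

lemma of_sub_one_mem_I2 (g : G) :
    MonoidAlgebra.of ℤ G g - 1 ∈ (I2 G).restrictScalars ℤ := by
  simp [I2, aug2, RingHom.mem_ker, map_sub, aug_single]

lemma two_mem_I2 : (2 : MonoidAlgebra ℤ G) ∈ (I2 G).restrictScalars ℤ := by
  have : (aug2 G) 2 = 2 := by simp [map_ofNat]
  simp [I2, RingHom.mem_ker, this]
  decide

lemma N_mem_I2 [Fintype G] (h : Even (Fintype.card G)) :
    Nelt G ∈ (I2 G).restrictScalars ℤ := by
  have : (aug2 G) (Nelt G) = (Fintype.card G : ZMod 2) := by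
    simp [Nelt, map_sum, aug2, aug_single]
  simp only [Submodule.restrictScalars_mem, I2, RingHom.mem_ker, this]
  rw [ZMod.natCast_eq_zero_iff]
  exact h.two_dvd

lemma N_mem_N2 [Fintype G] : Nelt G ∈ (N2 G).restrictScalars ℤ :=
  Ideal.subset_span (by simp)

lemma two_mem_N2 [Fintype G] : (2 : MonoidAlgebra ℤ G) ∈ (N2 G).restrictScalars ℤ :=
  Ideal.subset_span (by simp)

lemma ideal_invariant (J : Ideal (MonoidAlgebra ℤ G)) :
    ∀ g : G, ∀ x ∈ J.restrictScalars ℤ, (regRep G) g x ∈ J.restrictScalars ℤ := by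
  intro g x hx
  exact J.mul_mem_left _ hx

/-- A (left) ideal of `ℤG`, regarded as a representation of `G`. -/
noncomputable def idealRep (J : Ideal (MonoidAlgebra ℤ G)) :
    Representation ℤ G ↥(J.restrictScalars ℤ) :=
  subRep (regRep G) (J.restrictScalars ℤ) (ideal_invariant G J)

/-- The quotient `ℤG/N` of `ℤG` by the ideal generated by the norm element, as a
representation of `G`. -/
noncomputable def quotNRep [Fintype G] :
    Representation ℤ G (MonoidAlgebra ℤ G ⧸ (NIdeal G).restrictScalars ℤ) :=
  quotRep (regRep G) ((NIdeal G).restrictScalars ℤ) (ideal_invariant G (NIdeal G))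

/-- `2` as an element of `(I,2)`. -/
noncomputable def twoI2 : ↥((I2 G).restrictScalars ℤ) := ⟨2, two_mem_I2 G⟩

/-- `g - 1` as an element of `(I,2)`. -/
noncomputable def gm1 (g : G) : ↥((I2 G).restrictScalars ℤ) :=
  ⟨MonoidAlgebra.of ℤ G g - 1, of_sub_one_mem_I2 G g⟩

/-- `g - 1` as an element of the augmentation ideal `I`. -/
noncomputable def gm1I (g : G) : ↥((augI G).restrictScalars ℤ) :=
  ⟨MonoidAlgebra.of ℤ G g - 1, of_sub_one_mem_augI G g⟩

/-- The norm element as an element of `(I,2)` (for `G` of even order). -/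
noncomputable def NeltI2 [Fintype G] (h : Even (Fintype.card G)) :
    ↥((I2 G).restrictScalars ℤ) := ⟨Nelt G, N_mem_I2 G h⟩

/-- The norm element as an element of `(N,2)`. -/
noncomputable def NeltN2 [Fintype G] : ↥((N2 G).restrictScalars ℤ) := ⟨Nelt G, N_mem_N2 G⟩

end GroupRing

section Main
variable (G : Type*) [Group G]

noncomputable def gb (g : G) : Additive (Abelianization G) := Additive.ofMul (Abelianization.of g)

lemma gb_mul (g h : G) : gb G (g*h) = gb G g + gb G h := by simp [gb]

lemma gb_one : gb G 1 = 0 := by simp [gb]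

lemma gb_surj (a : Additive (Abelianization G)) : ∃ g : G, gb G g = a := by
  obtain ⟨g, hg⟩ := QuotientGroup.mk_surjective (a.toMul)
  refine ⟨g, ?_⟩
  have : Abelianization.of g = Additive.toMul a := hg
  rw [gb, this]; rfl

noncomputable def theta : MonoidAlgebra ℤ G →ₗ[ℤ] (Additive (Abelianization G) ⊗[ℤ] ZMod 2) :=
  (Finsupp.linearCombination ℤ (fun g : G => gb G g ⊗ₜ (1 : ZMod 2))) ∘ₗ
    (MonoidAlgebra.coeffLinearEquiv ℤ).toLinearMap

lemma theta_single (g : G) (c : ℤ) :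
    theta G (MonoidAlgebra.single g c) = c • (gb G g ⊗ₜ (1 : ZMod 2)) :=
  show Finsupp.linearCombination ℤ (fun g : G => gb G g ⊗ₜ[ℤ] (1 : ZMod 2)) (Finsupp.single g c) = _ from
    Finsupp.linearCombination_single ℤ c g

lemma aug_single' (g : G) (c : ℤ) : aug G (MonoidAlgebra.single g c) = c := by
  have : MonoidAlgebra.single g c = c • MonoidAlgebra.single g (1:ℤ) := by
    rw [MonoidAlgebra.smul_single', mul_one]
  rw [this, map_smul, aug_single, smul_eq_mul, mul_one]

lemma tt_tmul (a : Additive (Abelianization G)) (c : ZMod 2) :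
    (a ⊗ₜ[ℤ] c) + (a ⊗ₜ[ℤ] c) = 0 := by
  rw [← TensorProduct.tmul_add]
  have : c + c = 0 := by
    have : (2 : ZMod 2) * c = 0 := by
      have h2 : (2 : ZMod 2) = 0 := by decide
      rw [h2, zero_mul]
    rwa [two_mul] at this
  rw [this, TensorProduct.tmul_zero]

lemma smul_parity {A : Type*} [AddCommGroup A] (x : A) (h : x + x = 0) (n : ℤ) :
    n • x = (n % 2) • x := by
  conv_lhs => rw [← Int.mul_ediv_add_emod n 2]
  rw [add_smul, mul_comm, mul_smul]
  have h2 : (2:ℤ) • x = 0 := by rw [two_smul]; exact h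
  rw [h2, smul_zero, zero_add]

lemma theta_mul (g : G) (y : MonoidAlgebra ℤ G) :
    theta G ((MonoidAlgebra.single g 1 - 1) * y) = aug G y • (gb G g ⊗ₜ (1 : ZMod 2)) := by
  induction y using MonoidAlgebra.induction_linear with
  | zero => simp
  | add f h hf hh => rw [mul_add, map_add, hf, hh, map_add, add_smul]
  | single h c =>
      rw [sub_mul, one_mul, MonoidAlgebra.single_mul_single, one_mul, map_sub,
        theta_single, theta_single, aug_single', gb_mul, TensorProduct.add_tmul,
        smul_add, add_sub_cancel_right]

end Main
section Main2
variable (G : Type*) [Group G]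

lemma idealRep_coe (J : Ideal (MonoidAlgebra ℤ G)) (g : G) (x : ↥(J.restrictScalars ℤ)) :
    ((idealRep G J g x : ↥(J.restrictScalars ℤ)) : MonoidAlgebra ℤ G)
      = MonoidAlgebra.single g 1 * (x : MonoidAlgebra ℤ G) := rfl

lemma Nelt_mul [Fintype G] (y : MonoidAlgebra ℤ G) :
    Nelt G * y = aug G y • Nelt G := by
  induction y using MonoidAlgebra.induction_linear with
  | zero => simp
  | add f h hf hh => rw [mul_add, hf, hh, map_add, add_smul]
  | single h c =>
      rw [Nelt, Finset.sum_mul, aug_single', Finset.smul_sum]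
      rw [show (∑ g : G, MonoidAlgebra.of ℤ G g * MonoidAlgebra.single h c)
            = ∑ g : G, MonoidAlgebra.single (g * h) c from
          Finset.sum_congr rfl fun g _ => by
            rw [MonoidAlgebra.of_apply, MonoidAlgebra.single_mul_single, one_mul]]
      rw [show (∑ g : G, c • MonoidAlgebra.of ℤ G g)
            = ∑ g : G, MonoidAlgebra.single (g : G) c from
          Finset.sum_congr rfl fun g _ => by
            rw [MonoidAlgebra.of_apply, MonoidAlgebra.smul_single', mul_one]]
      exact Fintype.sum_bijective (· * h) (Group.mulRight_bijective h) _ _ fun x => rfl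

lemma normMap_coe [Fintype G] (J : Ideal (MonoidAlgebra ℤ G)) (x : ↥(J.restrictScalars ℤ)) :
    ((normMap (idealRep G J) x : ↥(J.restrictScalars ℤ)) : MonoidAlgebra ℤ G)
      = Nelt G * (x : MonoidAlgebra ℤ G) := by
  rw [normMap, LinearMap.sum_apply]
  rw [Submodule.coe_sum]
  rw [Nelt, Finset.sum_mul]
  exact Finset.sum_congr rfl fun g _ => by rw [idealRep_coe, MonoidAlgebra.of_apply]

lemma aug_Nelt [Fintype G] : aug G (Nelt G) = (Fintype.card G : ℤ) := by
  rw [Nelt, map_sum]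
  simp [aug_single]

lemma normMap_eq_zero_iff [Fintype G] (x : ↥((I2 G).restrictScalars ℤ)) :
    normMap (idealRep G (I2 G)) x = 0 ↔ aug G (x : MonoidAlgebra ℤ G) = 0 := by
  constructor
  · intro h
    have h' : Nelt G * (x : MonoidAlgebra ℤ G) = 0 := by
      rw [← normMap_coe, h]; rfl
    rw [Nelt_mul] at h'
    have := congrArg (aug G) h'
    rw [map_smul, aug_Nelt, map_zero, smul_eq_mul] at this
    have hcard : (Fintype.card G : ℤ) ≠ 0 := by positivity
    exact (mul_eq_zero.mp this).resolve_right hcard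
  · intro h
    have : ((normMap (idealRep G (I2 G)) x : _) : MonoidAlgebra ℤ G) = 0 := by
      rw [normMap_coe, Nelt_mul, h, zero_smul]
    exact Subtype.ext this

end Main2
section Main3
variable (G : Type*) [Group G]

lemma mem_coinvRel_of_gen {V : Type*} [AddCommGroup V] [Module ℤ V]
    (ρ : Representation ℤ G V) (g : G) (v : V) : ρ g v - v ∈ coinvRel ρ :=
  Submodule.subset_span ⟨(g, v), rfl⟩

lemma gm1_rel (g h : G) :
    gm1 G (g * h) - gm1 G g - gm1 G h
      = idealRep G (I2 G) g (gm1 G h) - gm1 G h := by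
  apply Subtype.ext
  push_cast [gm1, idealRep_coe]
  simp only [MonoidAlgebra.of_apply, mul_sub, mul_one, MonoidAlgebra.single_mul_single, one_mul]
  abel

noncomputable def phiMul : G →* Multiplicative (Coinv (idealRep G (I2 G))) where
  toFun g := Multiplicative.ofAdd (Submodule.Quotient.mk (gm1 G g))
  map_one' := by
    have : gm1 G (1 : G) = 0 := by
      apply Subtype.ext; simp [gm1, MonoidAlgebra.of_apply, ← MonoidAlgebra.one_def]
    simp [this]
  map_mul' g h := by
    have key : Submodule.Quotient.mk (p := coinvRel (idealRep G (I2 G))) (gm1 G (g*h))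
        = Submodule.Quotient.mk (gm1 G g) + Submodule.Quotient.mk (gm1 G h) := by
      rw [← Submodule.Quotient.mk_add, Submodule.Quotient.eq]
      rw [show gm1 G (g*h) - (gm1 G g + gm1 G h)
            = gm1 G (g * h) - gm1 G g - gm1 G h by abel, gm1_rel]
      exact mem_coinvRel_of_gen G _ g (gm1 G h)
    simp [key]

noncomputable def phi1 : Additive (Abelianization G) →+ Coinv (idealRep G (I2 G)) :=
  MonoidHom.toAdditiveLeft (Abelianization.lift (phiMul G))

lemma phi1_gb (g : G) :
    phi1 G (gb G g) = Submodule.Quotient.mk (gm1 G g) := rfl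

lemma phi1_tt (a : Additive (Abelianization G)) : phi1 G a + phi1 G a = 0 := by
  obtain ⟨g, rfl⟩ := gb_surj G a
  rw [phi1_gb, ← Submodule.Quotient.mk_add, Submodule.Quotient.mk_eq_zero]
  have key : gm1 G g + gm1 G g = idealRep G (I2 G) g (twoI2 G) - twoI2 G := by
    apply Subtype.ext
    push_cast [gm1, idealRep_coe, twoI2]
    simp only [MonoidAlgebra.of_apply, mul_sub, mul_one, mul_two,
      MonoidAlgebra.single_mul_single]
    rw [show (2 : MonoidAlgebra ℤ G) = 1 + 1 from one_add_one_eq_two.symm]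
    abel
  rw [key]
  exact mem_coinvRel_of_gen G _ g (twoI2 G)

lemma val_smul_parity (n m : ℤ) (a : Additive (Abelianization G))
    (h : n % 2 = m % 2) : n • phi1 G a = m • phi1 G a := by
  rw [smul_parity _ (phi1_tt G a) n, smul_parity _ (phi1_tt G a) m, h]

noncomputable def Bmap : Additive (Abelianization G) →ₗ[ℤ]
    ZMod 2 →ₗ[ℤ] Coinv (idealRep G (I2 G)) where
  toFun a :=
    { toFun := fun c => ((c.val : ℤ)) • phi1 G a
      map_add' := fun c d => by
        show (((c + d).val : ℤ)) • phi1 G a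
            = ((c.val : ℤ)) • phi1 G a + ((d.val : ℤ)) • phi1 G a
        rw [← add_smul]
        apply val_smul_parity
        have h := ZMod.val_add c d
        push_cast [h]
        omega
      map_smul' := fun n c => by
        show (((n • c).val : ℤ)) • phi1 G a = n • (((c.val : ℤ)) • phi1 G a)
        have hc : c = 0 ∨ c = 1 := by revert c; decide
        rcases hc with rfl | rfl
        · simp
        · have h1 : (n • (1 : ZMod 2)) = (n : ZMod 2) := by
            rw [zsmul_eq_mul, mul_one]
          rw [h1, smul_comm, ← smul_assoc, smul_eq_mul]
          apply val_smul_parity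
          rw [ZMod.val_intCast n,
            show ZMod.val (1 : ZMod 2) = 1 from rfl]
          omega }
  map_add' a b := by
    ext c
    show ((c.val : ℤ)) • phi1 G (a + b)
        = ((c.val : ℤ)) • phi1 G a + ((c.val : ℤ)) • phi1 G b
    rw [map_add, smul_add]
  map_smul' n a := by
    ext c
    show ((c.val : ℤ)) • phi1 G (n • a) = n • (((c.val : ℤ)) • phi1 G a)
    rw [map_zsmul, smul_comm]

end Main3
section Main4
variable (G : Type*) [Group G]

/-- `theta` restricted to `(I,2)`. -/
noncomputable def thetaV : ↥((I2 G).restrictScalars ℤ) →ₗ[ℤ]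
    (Additive (Abelianization G) ⊗[ℤ] ZMod 2) :=
  (theta G).comp (Submodule.subtype _)

lemma coinvRel_le_ker_thetaV :
    coinvRel (idealRep G (I2 G)) ≤ LinearMap.ker (thetaV G) := by
  rw [coinvRel, Submodule.span_le]
  rintro x ⟨⟨g, v⟩, rfl⟩
  simp only [SetLike.mem_coe, LinearMap.mem_ker, thetaV, LinearMap.comp_apply,
    Submodule.coe_subtype, AddSubgroupClass.coe_sub, idealRep_coe]
  have : MonoidAlgebra.single g 1 * (v : MonoidAlgebra ℤ G) - (v : MonoidAlgebra ℤ G)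
      = (MonoidAlgebra.single g 1 - 1) * (v : MonoidAlgebra ℤ G) := by
    rw [sub_mul, one_mul]
  rw [this, theta_mul]
  -- `aug v` is even since `v ∈ (I,2)`
  have hv : (2 : ℤ) ∣ aug G (v : MonoidAlgebra ℤ G) := by
    have hmem : aug2 G (v : MonoidAlgebra ℤ G) = 0 := v.2
    rw [aug2, RingHom.comp_apply] at hmem
    exact (ZMod.intCast_zmod_eq_zero_iff_dvd _ 2).mp hmem
  obtain ⟨k, hk⟩ := hv
  rw [hk, mul_comm, mul_smul]
  have h2 : (2:ℤ) • (gb G g ⊗ₜ[ℤ] (1 : ZMod 2)) = 0 := by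
    rw [two_smul]; exact tt_tmul G _ _
  rw [h2, smul_zero]

/-- The induced map on coinvariants. -/
noncomputable def thetaBar : Coinv (idealRep G (I2 G)) →ₗ[ℤ]
    (Additive (Abelianization G) ⊗[ℤ] ZMod 2) :=
  Submodule.liftQ _ (thetaV G) (coinvRel_le_ker_thetaV G)

lemma thetaBar_mk (x : ↥((I2 G).restrictScalars ℤ)) :
    thetaBar G (Submodule.Quotient.mk x) = theta G (x : MonoidAlgebra ℤ G) := rfl

/-- `y ↦ y - aug(y)·1` as a map into `(I,2)`. -/
noncomputable def Lmap : MonoidAlgebra ℤ G →ₗ[ℤ] ↥((I2 G).restrictScalars ℤ) :=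
  LinearMap.codRestrict _
    (LinearMap.id - (Algebra.linearMap ℤ (MonoidAlgebra ℤ G)).comp (aug G).toLinearMap)
    (by
      intro y
      simp only [LinearMap.sub_apply, LinearMap.id_apply, LinearMap.comp_apply,
        AlgHom.toLinearMap_apply, Algebra.linearMap_apply, Submodule.restrictScalars_mem]
      rw [I2, RingHom.mem_ker, map_sub]
      have : aug2 G ((algebraMap ℤ (MonoidAlgebra ℤ G)) (aug G y))
          = ((aug G y : ℤ) : ZMod 2) := by
        simp [aug2, aug]
      rw [this, aug2, RingHom.comp_apply]
      simp)

lemma Lmap_coe (y : MonoidAlgebra ℤ G) :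
    (Lmap G y : MonoidAlgebra ℤ G) = y - algebraMap ℤ (MonoidAlgebra ℤ G) (aug G y) := rfl

lemma main_id (y : MonoidAlgebra ℤ G) :
    TensorProduct.lift (Bmap G) (theta G y) = Submodule.Quotient.mk (Lmap G y) := by
  induction y using MonoidAlgebra.induction_linear with
  | zero => simp
  | add f h hf hh => rw [map_add, map_add, hf, hh, map_add, Submodule.Quotient.mk_add]
  | single h c =>
      rw [theta_single, map_smul, TensorProduct.lift.tmul]
      have hB : (Bmap G) (gb G h) (1 : ZMod 2) = Submodule.Quotient.mk (gm1 G h) := by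
        show (((1 : ZMod 2).val : ℤ)) • phi1 G (gb G h) = _
        rw [show ZMod.val (1 : ZMod 2) = 1 from rfl, phi1_gb]
        norm_num
      rw [hB]
      have : c • gm1 G h = Lmap G (MonoidAlgebra.single h c) := by
        apply Subtype.ext
        push_cast [gm1, Lmap_coe, aug_single']
        rw [MonoidAlgebra.of_apply, smul_sub, MonoidAlgebra.smul_single', mul_one]
        congr 1
        rw [zsmul_one]
        rfl
      rw [← this, ← Submodule.Quotient.mk_smul]

end Main4
section Main5
variable (G : Type*) [Group G]

lemma liftB_tmul (g : G) (c : ZMod 2) :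
    TensorProduct.lift (Bmap G) (gb G g ⊗ₜ[ℤ] c)
      = ((c.val : ℤ)) • (Submodule.Quotient.mk (gm1 G g) : Coinv (idealRep G (I2 G))) := by
  rw [TensorProduct.lift.tmul]
  show ((c.val : ℤ)) • phi1 G (gb G g) = _
  rw [phi1_gb]

lemma normBar_mk [Fintype G] {V : Type*} [AddCommGroup V] [Module ℤ V]
    (ρ : Representation ℤ G V) (x : V) :
    normBar ρ (Submodule.Quotient.mk x) = normMap ρ x := rfl

lemma normBar_lift [Fintype G] (z : Additive (Abelianization G) ⊗[ℤ] ZMod 2) :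
    normBar (idealRep G (I2 G)) (TensorProduct.lift (Bmap G) z) = 0 := by
  have h : (normBar (idealRep G (I2 G))).comp (TensorProduct.lift (Bmap G)) = 0 := by
    apply TensorProduct.ext'
    intro a c
    obtain ⟨g, rfl⟩ := gb_surj G a
    rw [LinearMap.comp_apply, liftB_tmul, map_smul, normBar_mk]
    have : normMap (idealRep G (I2 G)) (gm1 G g) = 0 := by
      rw [normMap_eq_zero_iff]
      show aug G (MonoidAlgebra.of ℤ G g - 1) = 0
      rw [map_sub, MonoidAlgebra.of_apply, aug_single, map_one, sub_self]
    rw [this, smul_zero, LinearMap.zero_apply]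
  exact congrFun (congrArg DFunLike.coe h) z

noncomputable def PhiK [Fintype G] : (Additive (Abelianization G) ⊗[ℤ] ZMod 2) →ₗ[ℤ]
    ↥(LinearMap.ker (normBar (idealRep G (I2 G)))) :=
  LinearMap.codRestrict _ (TensorProduct.lift (Bmap G)) (fun z => normBar_lift G z)

lemma PhiK_coe [Fintype G] (z : Additive (Abelianization G) ⊗[ℤ] ZMod 2) :
    ((PhiK G z : _) : Coinv (idealRep G (I2 G))) = TensorProduct.lift (Bmap G) z := rfl

noncomputable def PsiK [Fintype G] : ↥(LinearMap.ker (normBar (idealRep G (I2 G)))) →ₗ[ℤ]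
    (Additive (Abelianization G) ⊗[ℤ] ZMod 2) :=
  (thetaBar G).comp (Submodule.subtype _)

lemma PsiK_PhiK [Fintype G] : (PsiK G).comp (PhiK G) = LinearMap.id := by
  apply TensorProduct.ext'
  intro a c
  obtain ⟨g, rfl⟩ := gb_surj G a
  show PsiK G (PhiK G (gb G g ⊗ₜ[ℤ] c)) = gb G g ⊗ₜ[ℤ] c
  have h1 : ((PhiK G (gb G g ⊗ₜ[ℤ] c) : _) : Coinv (idealRep G (I2 G)))
      = ((c.val : ℤ)) • Submodule.Quotient.mk (gm1 G g) := by
    rw [PhiK_coe, liftB_tmul]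
  rw [PsiK, LinearMap.comp_apply, Submodule.coe_subtype, h1, map_smul, thetaBar_mk]
  have h2 : theta G ((gm1 G g : MonoidAlgebra ℤ G)) = gb G g ⊗ₜ[ℤ] (1 : ZMod 2) := by
    show theta G (MonoidAlgebra.of ℤ G g - 1) = _
    rw [map_sub, MonoidAlgebra.of_apply, theta_single, MonoidAlgebra.one_def,
      theta_single, gb_one, one_smul, one_smul, TensorProduct.zero_tmul, sub_zero]
  rw [h2]
  have hc : ∀ c : ZMod 2, c = 0 ∨ c = 1 := by decide
  rcases hc c with rfl | rfl
  · rw [show ZMod.val (0 : ZMod 2) = 0 from rfl]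
    rw [TensorProduct.tmul_zero]
    norm_num
  · rw [show ZMod.val (1 : ZMod 2) = 1 from rfl]
    norm_num

lemma PhiK_PsiK [Fintype G] : (PhiK G).comp (PsiK G) = LinearMap.id := by
  apply LinearMap.ext
  intro z
  apply Subtype.ext
  obtain ⟨x, hx⟩ := Submodule.Quotient.mk_surjective _ (z : Coinv (idealRep G (I2 G)))
  have hz : aug G (x : MonoidAlgebra ℤ G) = 0 := by
    have h0 : normBar (idealRep G (I2 G)) (z : Coinv (idealRep G (I2 G))) = 0 := z.2
    rw [← hx, normBar_mk] at h0
    exact (normMap_eq_zero_iff G x).mp h0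
  have hL : Lmap G (x : MonoidAlgebra ℤ G) = x := by
    apply Subtype.ext
    rw [Lmap_coe, hz, map_zero, sub_zero]
  rw [LinearMap.comp_apply, LinearMap.id_apply, PhiK_coe,
    PsiK, LinearMap.comp_apply, Submodule.coe_subtype, ← hx, thetaBar_mk, main_id, hL, hx]

end Main5

theorem stmt8' {G : Type*} [Group G] [Fintype G] :
    ∃ e : (Additive (Abelianization G)) ⊗[ℤ] (ZMod 2) ≃+
        ↥(LinearMap.ker (normBar (idealRep G (I2 G)))),
      ∀ g : G,
        ((e ((Additive.ofMul (Abelianization.of g)) ⊗ₜ[ℤ] (1 : ZMod 2)) :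
            ↥(LinearMap.ker (normBar (idealRep G (I2 G))))) :
          Coinv (idealRep G (I2 G))) = Submodule.Quotient.mk (gm1 G g) := by
  refine ⟨(LinearEquiv.ofLinear (PhiK G) (PsiK G) (PhiK_PsiK G) (PsiK_PhiK G)).toAddEquiv,
    fun g => ?_⟩
  show ((PhiK G (gb G g ⊗ₜ[ℤ] (1 : ZMod 2)) : _) : Coinv (idealRep G (I2 G))) = _
  rw [PhiK_coe, liftB_tmul,
    show ZMod.val (1 : ZMod 2) = 1 from rfl]
  norm_num

/-- For a finite group `G`, the Tate homology group `Ĥ₀(G; (I,2))` (the kernel of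
the norm map on the coinvariants) is isomorphic to `G^{ab} ⊗_ℤ ℤ/2`, via the map sending
`g ⊗ 1` to the class of `g - 1`. -/
theorem stmt8 {G : Type*} [Group G] [Fintype G] :
    ∃ e : (Additive (Abelianization G)) ⊗[ℤ] (ZMod 2) ≃+
        ↥(LinearMap.ker (normBar (idealRep G (I2 G)))),
      ∀ g : G,
        ((e ((Additive.ofMul (Abelianization.of g)) ⊗ₜ[ℤ] (1 : ZMod 2)) :
            ↥(LinearMap.ker (normBar (idealRep G (I2 G))))) :
          Coinv (idealRep G (I2 G))) = Submodule.Quotient.mk (gm1 G g) := stmt8'
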